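/- Let E be a real inner product space and f : E → ℝ a convex differentiable function whose gradient is affine Lipschitz with constants L ≥ 0 and c ≥ 0, i.e., ‖∇f(w₂) − ∇f(w₁)‖ ≤ L‖w₂ − w₁‖ + c for all w₁, w₂ ∈ E. Then for all w₁, w₂ ∈ E: (1/(2(L+1)))·‖∇f(w₂) − ∇f(w₁)‖² ≤ f(w₁) − f(w₂) − ⟪∇f(w₂), w₁ − w₂⟫ + c²/2. -/

import Mathlib

open RealInnerProductSpace Filter Topology

private lemma line_hasDerivAt {E : Type*} [NormedAddCommGroup E] [InnerProductSpace ℝ E]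
    [CompleteSpace E] (f : E → ℝ) (g : E → E)
    (hgrad : ∀ w : E, HasGradientAt f (g w) w) (x v : E) (t : ℝ) :
    HasDerivAt (fun s : ℝ => f (x + s • v)) ⟪g (x + t • v), v⟫ t := by
  have hline : HasDerivAt (fun s : ℝ => x + s • v) v t := by
    simpa using ((hasDerivAt_id t).smul_const v).const_add x
  have hf : HasFDerivAt f ((InnerProductSpace.toDual ℝ E) (g (x + t • v))) (x + t • v) :=
    (hasGradientAt_iff_hasFDerivAt).1 (hgrad _)
  have := hf.comp_hasDerivAt t hline
  exact (by simpa [InnerProductSpace.toDual_apply_apply] using this : HasDerivAt (f ∘ fun s : ℝ => x + s • v) ⟪g (x + t • v), v⟫ t)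

private lemma conv_lower {E : Type*} [NormedAddCommGroup E] [InnerProductSpace ℝ E]
    [CompleteSpace E] (f : E → ℝ) (g : E → E)
    (hconv : ConvexOn ℝ Set.univ f)
    (hgrad : ∀ w : E, HasGradientAt f (g w) w) (x y : E) :
    f x + ⟪g x, y - x⟫ ≤ f y := by
  have hd : HasDerivAt (fun s : ℝ => f (x + s • (y - x))) ⟪g x, y - x⟫ 0 := by
    simpa using line_hasDerivAt f g hgrad x (y - x) 0
  have hslope : Tendsto (slope (fun s : ℝ => f (x + s • (y - x))) 0) (𝓝[>] (0:ℝ))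
      (𝓝 ⟪g x, y - x⟫) :=
    ((hasDerivAt_iff_tendsto_slope).1 hd).mono_left
      (nhdsWithin_mono 0 (fun t ht => ne_of_gt ht))
  have hbound : ∀ᶠ t in 𝓝[>] (0:ℝ),
      slope (fun s : ℝ => f (x + s • (y - x))) 0 t ≤ f y - f x := by
    filter_upwards [Ioo_mem_nhdsGT_of_mem (Set.left_mem_Ico.2 one_pos)] with t ht
    have ht0 : 0 < t := ht.1
    have hcc : f (x + t • (y - x)) ≤ (1 - t) * f x + t * f y := by
      have := hconv.2 (Set.mem_univ x) (Set.mem_univ y)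
        (by linarith [ht.2] : (0:ℝ) ≤ 1 - t) (le_of_lt ht0) (by ring)
      have hxy : (1 - t) • x + t • y = x + t • (y - x) := by
        rw [smul_sub, sub_smul, one_smul]; abel
      simpa [hxy, smul_eq_mul] using this
    rw [slope_def_field]
    simp only [zero_smul, add_zero, sub_zero]
    rw [div_le_iff₀ ht0]
    nlinarith
  have := le_of_tendsto hslope hbound
  linarith

private lemma descent {E : Type*} [NormedAddCommGroup E] [InnerProductSpace ℝ E]
    [CompleteSpace E] (f : E → ℝ) (g : E → E) (L c : ℝ)
    (hgrad : ∀ w : E, HasGradientAt f (g w) w)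
    (haff : ∀ w₁ w₂ : E, ‖g w₂ - g w₁‖ ≤ L * ‖w₂ - w₁‖ + c) (x y : E) :
    f y ≤ f x + ⟪g x, y - x⟫ + L / 2 * ‖y - x‖ ^ 2 + c * ‖y - x‖ := by
  set v := y - x with hv
  set ψ : ℝ → ℝ := fun t => f (x + t • v) - t * ⟪g x, v⟫ - L * t ^ 2 / 2 * ‖v‖ ^ 2 - c * t * ‖v‖
    with hψ
  have hderiv : ∀ t : ℝ, HasDerivAt ψ
      (⟪g (x + t • v), v⟫ - ⟪g x, v⟫ - L * t * ‖v‖ ^ 2 - c * ‖v‖) t := by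
    intro t
    have h1 := line_hasDerivAt f g hgrad x v t
    have h2 : HasDerivAt (fun t : ℝ => t * ⟪g x, v⟫) ⟪g x, v⟫ t := by
      simpa using (hasDerivAt_id t).mul_const ⟪g x, v⟫
    have h3 : HasDerivAt (fun t : ℝ => L * t ^ 2 / 2 * ‖v‖ ^ 2) (L * t * ‖v‖ ^ 2) t := by
      have : HasDerivAt (fun t : ℝ => t ^ 2) (2 * t) t := by
        simpa using hasDerivAt_pow 2 t
      have := ((this.const_mul L).div_const 2).mul_const (‖v‖ ^ 2)
      refine this.congr_deriv ?_; ring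
    have h4 : HasDerivAt (fun t : ℝ => c * t * ‖v‖) (c * ‖v‖) t := by
      have := ((hasDerivAt_id t).const_mul c).mul_const ‖v‖
      simpa using this
    exact ((h1.sub h2).sub h3).sub h4
  have hdiff : Differentiable ℝ ψ := fun t => (hderiv t).differentiableAt
  have hanti : AntitoneOn ψ (Set.Icc 0 1) := by
    apply antitoneOn_of_deriv_nonpos (convex_Icc 0 1) hdiff.continuous.continuousOn
      hdiff.differentiableOn
    intro t ht
    rw [interior_Icc] at ht
    rw [(hderiv t).deriv]
    have hCS : ⟪g (x + t • v) - g x, v⟫ ≤ ‖g (x + t • v) - g x‖ * ‖v‖ :=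
      real_inner_le_norm _ _
    have hAL : ‖g (x + t • v) - g x‖ ≤ L * (t * ‖v‖) + c := by
      have := haff x (x + t • v)
      simpa [norm_smul, abs_of_pos ht.1] using this
    have hv0 : (0:ℝ) ≤ ‖v‖ := norm_nonneg _
    have : ⟪g (x + t • v) - g x, v⟫ ≤ (L * (t * ‖v‖) + c) * ‖v‖ :=
      hCS.trans (by nlinarith)
    rw [inner_sub_left] at this
    nlinarith
  have h01 := hanti (Set.left_mem_Icc.2 zero_le_one) (Set.right_mem_Icc.2 zero_le_one)
    zero_le_one
  simp only [hψ, zero_smul, add_zero, one_smul, zero_pow, mul_zero, zero_mul, mul_one,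
    sub_zero, one_pow] at h01
  have hxy : x + v = y := by rw [hv]; abel
  rw [hxy] at h01
  linarith

/-- Co-coercivity-type inequality for a convex differentiable function whose
gradient is affine Lipschitz with constants `(L, c)`:
`(1/(2(L+1)))‖∇f(w₂) − ∇f(w₁)‖² ≤ f w₁ − f w₂ − ⟪∇f(w₂), w₁ − w₂⟫ + c²/2`. -/
theorem cocoercivity_affine_lipschitz_gradient
    {E : Type*} [NormedAddCommGroup E] [InnerProductSpace ℝ E] [CompleteSpace E]
    (f : E → ℝ) (g : E → E) (L c : ℝ) (hL : 0 ≤ L) (hc : 0 ≤ c)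
    (hconv : ConvexOn ℝ Set.univ f)
    (hgrad : ∀ w : E, HasGradientAt f (g w) w)
    (haff : ∀ w₁ w₂ : E, ‖g w₂ - g w₁‖ ≤ L * ‖w₂ - w₁‖ + c) :
    ∀ w₁ w₂ : E,
      1 / (2 * (L + 1)) * ‖g w₂ - g w₁‖ ^ 2 ≤
        f w₁ - f w₂ - ⟪g w₂, w₁ - w₂⟫ + c ^ 2 / 2 := by
  intro w₁ w₂
  set d := g w₁ - g w₂ with hd
  have hL1 : (0:ℝ) < L + 1 := by linarith
  set s : ℝ := 1 / (L + 1) with hs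
  set y : E := w₁ - s • d with hy
  have hlow := conv_lower f g hconv hgrad w₂ y
  have hdesc := descent f g L c hgrad haff w₁ y
  have hyx : y - w₁ = -(s • d) := by rw [hy]; abel
  have hyw2 : y - w₂ = (w₁ - w₂) - s • d := by rw [hy]; abel
  have hnorm : ‖y - w₁‖ = s * ‖d‖ := by
    rw [hyx, norm_neg, norm_smul, Real.norm_eq_abs, abs_of_pos (by positivity)]
  have hinner1 : ⟪g w₁, y - w₁⟫ = -(s * ⟪g w₁, d⟫) := by
    rw [hyx, inner_neg_right, real_inner_smul_right]
  have hinner2 : ⟪g w₂, y - w₂⟫ = ⟪g w₂, w₁ - w₂⟫ - s * ⟪g w₂, d⟫ := by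
    rw [hyw2, inner_sub_right, real_inner_smul_right]
  have hid : ⟪g w₁, d⟫ - ⟪g w₂, d⟫ = ‖d‖ ^ 2 := by
    rw [← inner_sub_left, ← hd, real_inner_self_eq_norm_sq]
  have hnd : ‖g w₂ - g w₁‖ = ‖d‖ := by rw [hd, norm_sub_rev]
  rw [hnorm, hinner1] at hdesc
  rw [hinner2] at hlow
  rw [hnd]
  have hdn : (0:ℝ) ≤ ‖d‖ := norm_nonneg _
  have hid' : s * ⟪g w₁, d⟫ - s * ⟪g w₂, d⟫ = s * ‖d‖ ^ 2 := by
    rw [← mul_sub, hid]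
  have key : f w₂ + ⟪g w₂, w₁ - w₂⟫ ≤
      f w₁ - s * ‖d‖ ^ 2 + L / 2 * (s * ‖d‖) ^ 2 + c * (s * ‖d‖) := by
    linarith [hlow, hdesc, hid']
  have hLs : L * s = 1 - s := by
    rw [hs]; field_simp; ring
  have e1 : L / 2 * (s * ‖d‖) ^ 2 = (1 - s) / 2 * s * ‖d‖ ^ 2 := by
    linear_combination (s * ‖d‖ ^ 2 / 2) * hLs
  have hcoef : 1 / (2 * (L + 1)) = s / 2 := by
    rw [hs]; field_simp
  rw [hcoef]
  nlinarith [sq_nonneg (s * ‖d‖ - c), key, e1]
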